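/- arXiv:2403.18528 — 2 statements merged into one kernel-verified Lean document; each statement's English description precedes it below -/
import Mathlib

section
/- Let Σ be a symmetric positive definite n×n real matrix, m ∈ ℝⁿ, M = Σ + m·mᵀ, a > 0, q_T > 0, and let B = [[A, p], [pᵀ, q]] be a symmetric positive semidefinite (n+1)×(n+1) real matrix with top-left n×n block A, vector p ∈ ℝⁿ, and scalar q. Then q_T·a² + q − (p + q_T·a·m)ᵀ(A + q_T·M)⁻¹(p + q_T·a·m) > 0. (This is the strict positivity of the value coefficient h_{(T−1)+} in the proof of Theorem 1.) -/
open Matrix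

/-- Strict positivity of the value coefficient `h_{(T-1)+}` in the proof of Theorem 1:
with `M = Σ + m mᵀ`, `a > 0`, `q_T > 0`, and `B = [[A, p], [pᵀ, q]]` positive semidefinite,
`q_T a² + q - (p + q_T a m)ᵀ (A + q_T M)⁻¹ (p + q_T a m) > 0`. -/
theorem stmt_1 {n : ℕ} (S : Matrix (Fin n) (Fin n) ℝ) (hS : S.PosDef)
    (m : Fin n → ℝ) (a qT : ℝ) (ha : 0 < a) (hqT : 0 < qT)
    (A : Matrix (Fin n) (Fin n) ℝ) (p : Fin n → ℝ) (q : ℝ)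
    (hB : (Matrix.fromBlocks A (Matrix.replicateCol Unit p) (Matrix.replicateRow Unit p)
        (Matrix.of fun _ _ => q)).PosSemidef) :
    0 < qT * a ^ 2 + q - (p + (qT * a) • m) ⬝ᵥ
      (A + qT • (S + Matrix.vecMulVec m m))⁻¹.mulVec (p + (qT * a) • m) := by
  classical
  set v : Fin n → ℝ := p + (qT * a) • m with hv
  set D : Matrix (Fin n) (Fin n) ℝ := A + qT • (S + Matrix.vecMulVec m m) with hDdef
  -- A is positive semidefinite
  have hA : A.PosSemidef := by
    have h := hB.submatrix (Sum.inl : Fin n → Fin n ⊕ Unit)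
    have he : (Matrix.fromBlocks A (Matrix.replicateCol Unit p) (Matrix.replicateRow Unit p)
        (Matrix.of fun _ _ => q)).submatrix Sum.inl Sum.inl = A := by
      ext i j; rfl
    rwa [he] at h
  -- m mᵀ is positive semidefinite
  have hmm : (Matrix.vecMulVec m m).PosSemidef := by
    have h := Matrix.posSemidef_conjTranspose_mul_self (Matrix.replicateRow Unit m)
    have he : (Matrix.replicateRow Unit m)ᴴ * Matrix.replicateRow Unit m = Matrix.vecMulVec m m := by
      ext i j
      simp [Matrix.vecMulVec_apply, Matrix.mul_apply, Matrix.conjTranspose_apply]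
    rwa [he] at h
  -- S + m mᵀ is positive definite
  have hSmm : (S + Matrix.vecMulVec m m).PosDef := hS.add_posSemidef hmm
  -- qT • (S + m mᵀ) is positive definite
  have hQ : (qT • (S + Matrix.vecMulVec m m)).PosDef := by
    refine Matrix.PosDef.of_dotProduct_mulVec_pos ?_ (fun x hx => ?_)
    · show (qT • (S + Matrix.vecMulVec m m))ᴴ = _
      rw [Matrix.conjTranspose_smul, hSmm.isHermitian.eq]
      simp
    · rw [Matrix.smul_mulVec, dotProduct_smul, smul_eq_mul]
      exact mul_pos hqT (hSmm.dotProduct_mulVec_pos hx)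
  have hD : D.PosDef := Matrix.PosDef.posSemidef_add hA hQ
  have hDet : IsUnit D.det := isUnit_iff_isUnit_det D |>.mp hD.isUnit
  set x₀ : Fin n → ℝ := -(D⁻¹.mulVec v) with hx₀
  -- D x₀ = -v
  have h1 : D.mulVec x₀ = -v := by
    rw [hx₀, Matrix.mulVec_neg, Matrix.mulVec_mulVec, Matrix.mul_nonsing_inv D hDet,
      Matrix.one_mulVec]
  -- v ⬝ D⁻¹ v = -(v ⬝ x₀)
  have e3 : v ⬝ᵥ D⁻¹.mulVec v = -(v ⬝ᵥ x₀) := by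
    rw [hx₀, dotProduct_neg, neg_neg]
  -- x₀ ⬝ D x₀ = -(v ⬝ x₀)
  have e2' : x₀ ⬝ᵥ D.mulVec x₀ = -(v ⬝ᵥ x₀) := by
    rw [h1, dotProduct_neg, dotProduct_comm]
  -- (m mᵀ) x = (m ⬝ x) • m
  have hmv : ∀ x : Fin n → ℝ, (Matrix.vecMulVec m m).mulVec x = (m ⬝ᵥ x) • m := by
    intro x
    ext i
    simp [Matrix.mulVec, Matrix.vecMulVec_apply, dotProduct, Finset.mul_sum,
      mul_assoc, mul_comm, mul_left_comm]
  -- expansion of the quadratic form of D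
  have e2 : x₀ ⬝ᵥ A.mulVec x₀ + qT * (x₀ ⬝ᵥ S.mulVec x₀)
      + qT * ((m ⬝ᵥ x₀) * (m ⬝ᵥ x₀)) = -(v ⬝ᵥ x₀) := by
    rw [← e2', hDdef]
    rw [Matrix.add_mulVec, Matrix.smul_mulVec, Matrix.add_mulVec, hmv,
      dotProduct_add, dotProduct_smul, dotProduct_add,
      dotProduct_smul]
    have : x₀ ⬝ᵥ m = m ⬝ᵥ x₀ := dotProduct_comm _ _
    simp [smul_eq_mul, this]
    ring
  have e1 : v ⬝ᵥ x₀ = p ⬝ᵥ x₀ + (qT * a) * (m ⬝ᵥ x₀) := by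
    rw [hv, add_dotProduct, smul_dotProduct, smul_eq_mul]
  -- the B-quadratic form at (x₀, 1) is nonnegative
  have hBq : 0 ≤ x₀ ⬝ᵥ A.mulVec x₀ + 2 * (p ⬝ᵥ x₀) + q := by
    have h := hB.dotProduct_mulVec_nonneg (Sum.elim x₀ (fun _ => (1 : ℝ)))
    have hcalc : star (Sum.elim x₀ (fun _ => (1 : ℝ))) ⬝ᵥ
        (Matrix.fromBlocks A (Matrix.replicateCol Unit p) (Matrix.replicateRow Unit p)
          (Matrix.of fun _ _ => q)).mulVec (Sum.elim x₀ (fun _ => (1 : ℝ)))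
        = x₀ ⬝ᵥ A.mulVec x₀ + 2 * (p ⬝ᵥ x₀) + q := by
      simp only [star_trivial, Matrix.fromBlocks_mulVec, sumElim_dotProduct_sumElim, Sum.elim_comp_inl, Sum.elim_comp_inr]
      have hcol : (Matrix.replicateCol Unit p).mulVec (fun _ => (1 : ℝ)) = p := by
        ext i; simp [Matrix.mulVec, dotProduct]
      have hrow : (Matrix.replicateRow Unit p).mulVec x₀ = fun _ => p ⬝ᵥ x₀ := by
        ext i; simp [Matrix.mulVec, dotProduct]
      have hq : ((Matrix.of fun _ _ => q : Matrix Unit Unit ℝ)).mulVec (fun _ => (1 : ℝ)) = fun _ => q := by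
        ext i; simp [Matrix.mulVec, dotProduct]
      rw [hcol, hrow, hq]
      have hcomm : x₀ ⬝ᵥ p = p ⬝ᵥ x₀ := dotProduct_comm _ _
      have h2 : (fun _ : Unit => (1 : ℝ)) ⬝ᵥ ((fun _ => p ⬝ᵥ x₀) + fun _ => q)
          = p ⬝ᵥ x₀ + q := by
        simp [dotProduct]
      rw [dotProduct_add, h2, hcomm]
      ring
    rw [hcalc] at h
    exact h
  -- key algebraic identity
  have key : qT * a ^ 2 + q - v ⬝ᵥ D⁻¹.mulVec v
      = (x₀ ⬝ᵥ A.mulVec x₀ + 2 * (p ⬝ᵥ x₀) + q) + qT * (x₀ ⬝ᵥ S.mulVec x₀)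
        + qT * (m ⬝ᵥ x₀ + a) ^ 2 := by
    rw [e3]
    nlinarith [e2, e1]
  rw [key]
  by_cases hx : x₀ = 0
  · have h1 : x₀ ⬝ᵥ A.mulVec x₀ = 0 := by rw [hx]; simp
    have h2 : p ⬝ᵥ x₀ = 0 := by rw [hx]; simp
    have h3 : x₀ ⬝ᵥ S.mulVec x₀ = 0 := by rw [hx]; simp
    have h4 : m ⬝ᵥ x₀ = 0 := by rw [hx]; simp
    rw [h1, h2, h3, h4]
    have hq0 : 0 ≤ q := by simpa [h1, h2] using hBq
    have : (0 : ℝ) + a = a := zero_add a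
    rw [this]
    nlinarith [mul_pos hqT (pow_pos ha 2)]
  · have hSx : 0 < x₀ ⬝ᵥ S.mulVec x₀ := by
      have := hS.dotProduct_mulVec_pos hx
      simpa using this
    nlinarith [sq_nonneg (m ⬝ᵥ x₀ + a), mul_pos hqT hSx]
end

section
/- Let (Ω, F, P) be a probability space and b : Ω → ℝⁿ measurable with E[‖b‖²] < ∞. Set m = E[b] and let Σ = E[b bᵀ] − m·mᵀ be the covariance matrix of b. Assume Σ is positive definite and m ≠ 0. Let a > 0, x₀ ∈ ℝ, and d ∈ ℝ with d ≥ a·x₀, and for u ∈ ℝⁿ let x₁(u) = a·x₀ + bᵀu. Set h = a²·(1 − mᵀ(Σ + m·mᵀ)⁻¹m). Then 0 < h < a², and the minimum of Var(x₁(u)) over all u ∈ ℝⁿ satisfying E[x₁(u)] = d equals h·(d − a·x₀)²/(a² − h), attained at u⋆ = Σ⁻¹m·(d − a·x₀)/(mᵀΣ⁻¹m). (This is the single-period case of the mean-variance efficient frontier of Theorem 2.) -/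
open MeasureTheory ProbabilityTheory Matrix

/-- Single-period case of the mean-variance efficient frontier of Theorem 2:
with `m = E[b]`, `Σ = E[b bᵀ] - m mᵀ` positive definite, `m ≠ 0`, `a > 0`,
`d ≥ a x₀`, and `h = a² (1 - mᵀ (Σ + m mᵀ)⁻¹ m)`, we have `0 < h < a²`, and the
minimum of `Var(a x₀ + bᵀ u)` over all `u` with `E[a x₀ + bᵀ u] = d` equals
`h (d - a x₀)² / (a² - h)`, attained at `u⋆ = Σ⁻¹ m (d - a x₀) / (mᵀ Σ⁻¹ m)`. -/
theorem stmt_8 {n : ℕ} {Ω : Type*} [MeasureSpace Ω]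
    [IsProbabilityMeasure (ℙ : Measure Ω)]
    (b : Ω → Fin n → ℝ) (hb_meas : Measurable b)
    (hb_int : Integrable (fun ω => ‖b ω‖ ^ 2))
    (m : Fin n → ℝ) (hm : m = fun i => ∫ ω, b ω i)
    (S : Matrix (Fin n) (Fin n) ℝ)
    (hS : S = Matrix.of fun i j => (∫ ω, b ω i * b ω j) - m i * m j)
    (hSpd : S.PosDef) (hm0 : m ≠ 0)
    (a x0 d : ℝ) (ha : 0 < a) (hd : a * x0 ≤ d)
    (h : ℝ) (hh : h = a ^ 2 * (1 - m ⬝ᵥ (S + Matrix.vecMulVec m m)⁻¹.mulVec m)) :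
    (0 < h ∧ h < a ^ 2) ∧
    (∫ ω, (a * x0 + b ω ⬝ᵥ (((d - a * x0) / (m ⬝ᵥ S⁻¹.mulVec m)) • S⁻¹.mulVec m)))
      = d ∧
    variance
      (fun ω => a * x0 + b ω ⬝ᵥ (((d - a * x0) / (m ⬝ᵥ S⁻¹.mulVec m)) • S⁻¹.mulVec m)) ℙ
      = h * (d - a * x0) ^ 2 / (a ^ 2 - h) ∧
    ∀ u : Fin n → ℝ, (∫ ω, (a * x0 + b ω ⬝ᵥ u)) = d →
      h * (d - a * x0) ^ 2 / (a ^ 2 - h) ≤ variance (fun ω => a * x0 + b ω ⬝ᵥ u) ℙ := by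
  -- basic measurability / integrability
  have hbi_meas : ∀ i, Measurable fun ω => b ω i := fun i =>
    (measurable_pi_apply i).comp hb_meas
  have hibb : ∀ i j, Integrable (fun ω => b ω i * b ω j) := by
    intro i j
    refine hb_int.mono' (((hbi_meas i).mul (hbi_meas j)).aestronglyMeasurable)
      (ae_of_all _ fun ω => ?_)
    have h1 : |b ω i| ≤ ‖b ω‖ := by simpa using norm_le_pi_norm (b ω) i
    have h2 : |b ω j| ≤ ‖b ω‖ := by simpa using norm_le_pi_norm (b ω) j
    calc ‖b ω i * b ω j‖ = |b ω i| * |b ω j| := by simp [abs_mul]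
      _ ≤ ‖b ω‖ * ‖b ω‖ := by
          exact mul_le_mul h1 h2 (abs_nonneg _) (norm_nonneg _)
      _ = ‖b ω‖ ^ 2 := (sq ‖b ω‖).symm
  have hmem2 : ∀ i, MemLp (fun ω => b ω i) 2 := fun i =>
    (memLp_two_iff_integrable_sq ((hbi_meas i).aestronglyMeasurable)).2
      (by simpa [sq] using hibb i i)
  have hib : ∀ i, Integrable (fun ω => b ω i) := fun i => (hmem2 i).integrable one_le_two
  have hIntX : ∀ u : Fin n → ℝ, Integrable (fun ω => b ω ⬝ᵥ u) := by
    intro u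
    exact integrable_finset_sum _ (fun i _ => (hib i).mul_const (u i))
  have hE1 : ∀ u : Fin n → ℝ, (∫ ω, b ω ⬝ᵥ u) = m ⬝ᵥ u := by
    intro u
    simp only [dotProduct]
    rw [integral_finset_sum _ (fun i _ => (hib i).mul_const (u i))]
    refine Finset.sum_congr rfl fun i _ => ?_
    rw [integral_mul_const, hm]
  have hsq : ∀ (u : Fin n → ℝ) (ω : Ω),
      (b ω ⬝ᵥ u) ^ 2 = ∑ i, ∑ j, (u i * u j) * (b ω i * b ω j) := by
    intro u ω
    simp only [dotProduct, sq]
    rw [Finset.sum_mul_sum]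
    exact Finset.sum_congr rfl fun i _ => Finset.sum_congr rfl fun j _ => by ring
  have hIntX2 : ∀ u : Fin n → ℝ, Integrable (fun ω => (b ω ⬝ᵥ u) ^ 2) := by
    intro u
    have heq : (fun ω => (b ω ⬝ᵥ u) ^ 2)
        = fun ω => ∑ i, ∑ j, (u i * u j) * (b ω i * b ω j) := funext (hsq u)
    rw [heq]
    exact integrable_finset_sum _ fun i _ =>
      integrable_finset_sum _ fun j _ => (hibb i j).const_mul _
  have hE2 : ∀ u : Fin n → ℝ,
      (∫ ω, (b ω ⬝ᵥ u) ^ 2) = ∑ i, ∑ j, (u i * u j) * ∫ ω, b ω i * b ω j := by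
    intro u
    simp_rw [hsq u]
    rw [integral_finset_sum _ (fun i _ =>
      integrable_finset_sum _ fun j _ => (hibb i j).const_mul _)]
    refine Finset.sum_congr rfl fun i _ => ?_
    rw [integral_finset_sum _ (fun j _ => (hibb i j).const_mul _)]
    exact Finset.sum_congr rfl fun j _ => integral_const_mul _ _
  have hXmem : ∀ u : Fin n → ℝ, MemLp (fun ω => a * x0 + b ω ⬝ᵥ u) 2 := by
    intro u
    have h1 : MemLp (fun ω => b ω ⬝ᵥ u) 2 := by
      have h2 := memLp_finset_sum (μ := (ℙ : Measure Ω)) Finset.univ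
        (f := fun i ω => u i * b ω i) (fun i _ => (hmem2 i).const_mul (u i))
      have heq : (fun ω => b ω ⬝ᵥ u) = fun ω => ∑ i, u i * b ω i := by
        funext ω; simp only [dotProduct]
        exact Finset.sum_congr rfl fun i _ => mul_comm _ _
      rw [heq]; exact h2
    exact (memLp_const (a * x0)).add h1
  have hEfull : ∀ u : Fin n → ℝ, (∫ ω, (a * x0 + b ω ⬝ᵥ u)) = a * x0 + m ⬝ᵥ u := by
    intro u
    rw [integral_add (integrable_const _) (hIntX u), hE1]
    simp
  have hSij : ∀ i j, S i j = (∫ ω, b ω i * b ω j) - m i * m j := fun i j => by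
    rw [hS]; rfl
  have hVar : ∀ u : Fin n → ℝ,
      variance (fun ω => a * x0 + b ω ⬝ᵥ u) ℙ = u ⬝ᵥ S.mulVec u := by
    intro u
    rw [variance_eq_sub (hXmem u)]
    have hpt : ∀ ω : Ω, ((fun ω => a * x0 + b ω ⬝ᵥ u) ^ 2) ω
        = (a * x0) ^ 2 + (2 * (a * x0) * (b ω ⬝ᵥ u) + (b ω ⬝ᵥ u) ^ 2) := by
      intro ω; simp only [Pi.pow_apply]; ring
    have e1 : (∫ ω, ((fun ω => a * x0 + b ω ⬝ᵥ u) ^ 2) ω)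
        = (a * x0) ^ 2 + (2 * (a * x0) * (m ⬝ᵥ u) + ∫ ω, (b ω ⬝ᵥ u) ^ 2) := by
      simp_rw [hpt]
      have i2 : Integrable (fun ω => 2 * (a * x0) * (b ω ⬝ᵥ u) + (b ω ⬝ᵥ u) ^ 2) :=
        ((hIntX u).const_mul (2 * (a * x0))).add (hIntX2 u)
      rw [integral_add (integrable_const _) i2,
        integral_add ((hIntX u).const_mul (2 * (a * x0))) (hIntX2 u),
        integral_const_mul, hE1]
      simp
    have key : (∫ ω, (b ω ⬝ᵥ u) ^ 2) - (m ⬝ᵥ u) ^ 2 = u ⬝ᵥ S.mulVec u := by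
      rw [hE2]
      have h1 : (m ⬝ᵥ u) ^ 2 = ∑ i, ∑ j, (m i * u i) * (m j * u j) := by
        simp only [dotProduct, sq]
        rw [Finset.sum_mul_sum]
      have h2 : u ⬝ᵥ S.mulVec u
          = ∑ i, ∑ j, ((u i * u j) * (∫ ω, b ω i * b ω j) - (m i * u i) * (m j * u j)) := by
        simp only [dotProduct, Matrix.mulVec, Finset.mul_sum]
        refine Finset.sum_congr rfl fun i _ => Finset.sum_congr rfl fun j _ => ?_
        rw [hSij i j]; ring
      rw [h1, h2, ← Finset.sum_sub_distrib]
      exact Finset.sum_congr rfl fun i _ => (Finset.sum_sub_distrib _ _).symm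
    rw [e1, hEfull u, ← key]
    ring
  -- matrix facts
  set v : Fin n → ℝ := S⁻¹.mulVec m with hv_def
  set α : ℝ := m ⬝ᵥ v with hα_def
  have hα : 0 < α := by simpa [hα_def, hv_def] using hSpd.inv.dotProduct_mulVec_pos hm0
  have hα' : α ≠ 0 := hα.ne'
  have h1α : (0:ℝ) < 1 + α := by linarith
  have h1α' : (1:ℝ) + α ≠ 0 := h1α.ne'
  have hdet : IsUnit S.det := isUnit_iff_ne_zero.2 hSpd.det_pos.ne'
  have hSv : S.mulVec v = m := by
    rw [hv_def, mulVec_mulVec, Matrix.mul_nonsing_inv _ hdet, one_mulVec]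
  have Ssymm : Sᵀ = S := by
    exact isHermitian_iff_isSymm.mp hSpd.1
  have hsymm : ∀ x y : Fin n → ℝ, x ⬝ᵥ S.mulVec y = y ⬝ᵥ S.mulVec x := by
    intro x y
    calc x ⬝ᵥ S *ᵥ y = (x ᵥ* S) ⬝ᵥ y := dotProduct_mulVec _ _ _
      _ = (x ᵥ* Sᵀ) ⬝ᵥ y := by rw [Ssymm]
      _ = (S *ᵥ x) ⬝ᵥ y := by rw [vecMul_transpose]
      _ = y ⬝ᵥ S *ᵥ x := dotProduct_comm _ _
  have hvmv : ∀ x : Fin n → ℝ, (vecMulVec m m).mulVec x = (m ⬝ᵥ x) • m := by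
    intro x; funext i
    simp only [Matrix.mulVec, Matrix.vecMulVec_apply, dotProduct, Pi.smul_apply,
      smul_eq_mul, Finset.sum_mul]
    exact Finset.sum_congr rfl fun j _ => by ring
  have hApd : (S + vecMulVec m m).PosDef := by
    refine PosDef.of_dotProduct_mulVec_pos ?_ ?_
    · refine hSpd.1.add ?_
      show (vecMulVec m m)ᴴ = vecMulVec m m
      ext i j
      simp [Matrix.vecMulVec_apply, mul_comm]
    · intro x hx
      rw [star_trivial]
      rw [add_mulVec, dotProduct_add, hvmv, dotProduct_smul, smul_eq_mul]
      have h2 : x ⬝ᵥ m = m ⬝ᵥ x := dotProduct_comm _ _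
      have h3 : 0 < x ⬝ᵥ S.mulVec x := by simpa using hSpd.dotProduct_mulVec_pos hx
      rw [h2]
      nlinarith [mul_self_nonneg (m ⬝ᵥ x)]
  have hAdet : IsUnit (S + vecMulVec m m).det := isUnit_iff_ne_zero.2 hApd.det_pos.ne'
  have hAinv : (S + vecMulVec m m)⁻¹.mulVec m = (1 + α)⁻¹ • v := by
    have h1 : (S + vecMulVec m m).mulVec ((1 + α)⁻¹ • v) = m := by
      rw [mulVec_smul, add_mulVec, hSv, hvmv, ← hα_def]
      funext i
      simp only [Pi.smul_apply, Pi.add_apply, smul_eq_mul]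
      field_simp
    calc (S + vecMulVec m m)⁻¹.mulVec m
        = (S + vecMulVec m m)⁻¹.mulVec ((S + vecMulVec m m).mulVec ((1 + α)⁻¹ • v)) := by
          rw [h1]
      _ = ((S + vecMulVec m m)⁻¹ * (S + vecMulVec m m)).mulVec ((1 + α)⁻¹ • v) :=
          mulVec_mulVec _ _ _
      _ = (1 + α)⁻¹ • v := by rw [Matrix.nonsing_inv_mul _ hAdet, one_mulVec]
  have hβ : m ⬝ᵥ (S + vecMulVec m m)⁻¹.mulVec m = (1 + α)⁻¹ * α := by
    rw [hAinv, dotProduct_smul, smul_eq_mul, hα_def]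
  have heq : h = a ^ 2 / (1 + α) := by
    rw [hh, hβ]
    field_simp
    ring
  have ha2 : (0:ℝ) < a ^ 2 := by positivity
  have h0 : 0 < h := by rw [heq]; positivity
  have hlt : h < a ^ 2 := by
    rw [heq, div_lt_iff₀ h1α]
    nlinarith [mul_pos ha2 hα]
  have hfrac : h * (d - a * x0) ^ 2 / (a ^ 2 - h) = (d - a * x0) ^ 2 / α := by
    have ha2h : a ^ 2 - h = a ^ 2 * α / (1 + α) := by
      rw [heq]; field_simp; ring
    rw [ha2h, heq]
    rw [div_eq_div_iff (by positivity) hα']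
    field_simp
  -- the candidate portfolio
  have hmu_star : m ⬝ᵥ (((d - a * x0) / α) • v) = d - a * x0 := by
    rw [dotProduct_smul, smul_eq_mul, ← hα_def]
    field_simp
  have hvSv : v ⬝ᵥ S.mulVec v = α := by
    rw [hSv, dotProduct_comm, ← hα_def]
  refine ⟨⟨h0, hlt⟩, ?_, ?_, ?_⟩
  · rw [hEfull, hmu_star]; ring
  · rw [hVar, hfrac]
    rw [smul_dotProduct, mulVec_smul, dotProduct_smul, hvSv]
    simp only [smul_eq_mul]
    field_simp
  · intro u hu
    have hmu : m ⬝ᵥ u = d - a * x0 := by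
      have := hEfull u
      rw [hu] at this
      linarith
    rw [hVar, hfrac]
    set c : ℝ := (d - a * x0) / α with hc_def
    have hw := hSpd.posSemidef.dotProduct_mulVec_nonneg (u - c • v)
    have hw' : (0:ℝ) ≤ (u - c • v) ⬝ᵥ S.mulVec (u - c • v) := by rw [star_trivial] at hw; exact hw
    have hexp : (u - c • v) ⬝ᵥ S.mulVec (u - c • v)
        = u ⬝ᵥ S.mulVec u - 2 * c * (d - a * x0) + c ^ 2 * α := by
      rw [mulVec_sub, mulVec_smul, hSv, sub_dotProduct, dotProduct_sub, dotProduct_sub,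
        smul_dotProduct, smul_dotProduct, dotProduct_smul, dotProduct_smul]
      have e1 : u ⬝ᵥ m = d - a * x0 := by rw [dotProduct_comm]; exact hmu
      have e2 : v ⬝ᵥ S.mulVec u = d - a * x0 := by rw [hsymm, hSv, dotProduct_comm]; exact hmu
      have e3 : v ⬝ᵥ m = α := by rw [dotProduct_comm, ← hα_def]
      rw [e1, e3]
      have e2' : v ⬝ᵥ S *ᵥ u = d - a * x0 := e2
      rw [e2']
      simp only [smul_eq_mul]
      ring
    have hval : (d - a * x0) ^ 2 / α = 2 * c * (d - a * x0) - c ^ 2 * α := by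
      rw [hc_def]; field_simp; ring
    rw [hexp] at hw'
    rw [hval]
    linarith
end
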